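/- Let J be a 12-dimensional symplectic F_2-vector space. Consider sets {q, q+a_1, q+a_2, q+a_3} of four distinct quadratic refinements, all with Arf invariant 0, where a_1, a_2, a_3 ∈ J are nonzero and distinct. Suppose {q, q+a_1, q+a_2, q+a_3} and {q', q'+a_1', q'+a_2', q'+a_3'} are two such sets with dim span(a_1,a_2,a_3) = dim span(a_1',a_2',a_3'), and there is a permutation σ ∈ S_3 with a_k·a_l = a'_{σ(k)}·a'_{σ(l)} for all k,l. Then there is a symplectic automorphism of J mapping the first set of quadratic forms to the second (i.e. an M ∈ Sp(J) acting on Quad(J) by q ↦ q∘M^{-1} carrying one 4-element set onto the other). -/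

import Mathlib

/-- `B` is a symplectic form on the `𝔽₂`-vector space `J`: bilinear, alternating and
non-degenerate. -/
def IsSymplectic {J : Type*} [AddCommGroup J] [Module (ZMod 2) J]
    (B : J → J → ZMod 2) : Prop :=
  (∀ x y z, B (x + y) z = B x z + B y z) ∧
  (∀ x y z, B x (y + z) = B x y + B x z) ∧
  (∀ x, B x x = 0) ∧
  (∀ x, (∀ y, B x y = 0) → x = 0)

/-- The set of quadratic refinements of the form `B`. -/
def QuadSet {J : Type*} [AddCommGroup J] (B : J → J → ZMod 2) : Set (J → ZMod 2) :=
  {q | ∀ x y, q x + q y + q (x + y) = B x y}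

/-- The Arf invariant of `q : J → ℤ/2`: it is `0` iff `q` takes the value `0` on more than
half of the elements of `J`. -/
noncomputable def ArfInv {J : Type*} [Finite J] (q : J → ZMod 2) : ZMod 2 :=
  if Nat.card J < 2 * Nat.card {x : J // q x = 0} then 0 else 1

set_option linter.unusedSectionVars false

namespace Stmt11Aux

variable {J : Type*} [AddCommGroup J] [Module (ZMod 2) J] {B : J → J → ZMod 2}

lemma zmod2_cases (c : ZMod 2) : c = 0 ∨ c = 1 := by revert c; decide

lemma add_self_zero (x : J) : x + x = 0 := by
  have : x + x = (1 + 1 : ZMod 2) • x := by rw [add_smul, one_smul]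
  rw [this, show (1 + 1 : ZMod 2) = 0 by decide, zero_smul]

lemma eq_of_add_eq_zero {x y : J} (h : x + y = 0) : x = y := by
  have : (x + y) + y = 0 + y := by rw [h]
  rwa [add_assoc, add_self_zero, add_zero, zero_add] at this

lemma Bzero_left (hB : IsSymplectic B) (y : J) : B 0 y = 0 := by
  have h := hB.1 0 0 y
  rw [add_zero] at h
  have : ∀ α : ZMod 2, α = α + α → α = 0 := by decide
  exact this _ h

lemma Bzero_right (hB : IsSymplectic B) (x : J) : B x 0 = 0 := by
  have h := hB.2.1 x 0 0
  rw [add_zero] at h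
  have : ∀ α : ZMod 2, α = α + α → α = 0 := by decide
  exact this _ h

lemma Bsymm (hB : IsSymplectic B) (x y : J) : B x y = B y x := by
  have h := hB.2.2.1 (x + y)
  rw [hB.1, hB.2.1, hB.2.1, hB.2.2.1, hB.2.2.1] at h
  have : ∀ α β : ZMod 2, 0 + α + (β + 0) = 0 → α = β := by decide
  exact this _ _ h

lemma Bsmul_left (hB : IsSymplectic B) (c : ZMod 2) (x y : J) :
    B (c • x) y = c * B x y := by
  rcases zmod2_cases c with rfl | rfl
  · rw [zero_smul, zero_mul, Bzero_left hB]
  · rw [one_smul, one_mul]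

lemma Bsmul_right (hB : IsSymplectic B) (c : ZMod 2) (x y : J) :
    B x (c • y) = c * B x y := by
  rcases zmod2_cases c with rfl | rfl
  · rw [zero_smul, zero_mul, Bzero_right hB]
  · rw [one_smul, one_mul]

/-- Every additive functional is represented by `B v ·`. -/
lemma exists_rep (hB : IsSymplectic B) [FiniteDimensional (ZMod 2) J]
    (f : J →ₗ[ZMod 2] ZMod 2) : ∃ v, ∀ y, B v y = f y := by
  let φ : J →ₗ[ZMod 2] Module.Dual (ZMod 2) J :=
    LinearMap.mk₂ (ZMod 2) B hB.1 (Bsmul_left hB) hB.2.1 (Bsmul_right hB)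
  have hinj : Function.Injective φ := by
    intro x y hxy
    have h0 : ∀ z, B (x + y) z = 0 := by
      intro z
      have : B x z = B y z := by
        have := congrArg (fun g => g z) hxy
        simpa [φ] using this
      rw [hB.1, this, add_self_zero]
    have : x + y = 0 := hB.2.2.2 _ h0
    exact eq_of_add_eq_zero this
  have hsurj : Function.Surjective φ :=
    (LinearMap.injective_iff_surjective_of_finrank_eq_finrank
      (Subspace.dual_finrank_eq (K := ZMod 2) (V := J)).symm).mp hinj
  obtain ⟨v, hv⟩ := hsurj f
  exact ⟨v, fun y => by have := congrArg (fun g => g y) hv; simpa [φ] using this⟩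

/-- Prescribe values of `B · v` on a linearly independent family. -/
lemma exists_dual (hB : IsSymplectic B) [FiniteDimensional (ZMod 2) J]
    {k : ℕ} {x : Fin k → J} (hx : LinearIndependent (ZMod 2) x)
    (c : Fin k → ZMod 2) : ∃ v, ∀ i, B (x i) v = c i := by
  let bW := Module.Basis.span hx
  let fW : Submodule.span (ZMod 2) (Set.range x) →ₗ[ZMod 2] ZMod 2 :=
    bW.constr (ZMod 2) c
  obtain ⟨g, hg⟩ := LinearMap.exists_extend fW
  obtain ⟨v, hv⟩ := exists_rep hB g
  refine ⟨v, fun i => ?_⟩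
  rw [Bsymm hB, hv]
  have hmem : x i ∈ Submodule.span (ZMod 2) (Set.range x) :=
    Submodule.subset_span ⟨i, rfl⟩
  have : g (x i) = fW ⟨x i, hmem⟩ := by
    have := congrArg (fun h => h ⟨x i, hmem⟩) hg
    simpa using this
  rw [this]
  have hbi : (⟨x i, hmem⟩ : Submodule.span (ZMod 2) (Set.range x)) = bW i := by
    apply Subtype.ext
    rw [Module.Basis.span_apply]
  rw [hbi]
  exact bW.constr_basis (ZMod 2) c i


/-- Symplectic transvection along `v`. -/
lemma transvection (hB : IsSymplectic B) (v : J) :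
    ∃ T : J ≃ₗ[ZMod 2] J, (∀ x, T x = x + B v x • v) ∧
      (∀ x, T.symm x = x + B v x • v) ∧ (∀ x y, B (T x) (T y) = B x y) := by
  let L : J →ₗ[ZMod 2] J :=
    { toFun := fun x => x + B v x • v
      map_add' := by
        intro x y
        show (x + y) + B v (x + y) • v = (x + B v x • v) + (y + B v y • v)
        rw [hB.2.1, add_smul]
        abel
      map_smul' := by
        intro c x
        simp only [RingHom.id_apply]
        show (c • x) + B v (c • x) • v = c • (x + B v x • v)
        rw [Bsmul_right hB, smul_add, mul_smul] }
  have hBv : ∀ x, B v (x + B v x • v) = B v x := by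
    intro x
    rw [hB.2.1, Bsmul_right hB, hB.2.2.1, mul_zero, add_zero]
  have hinv : Function.Involutive L := by
    intro x
    show L x + B v (L x) • v = x
    show (x + B v x • v) + B v (x + B v x • v) • v = x
    rw [hBv, add_assoc, ← add_smul]
    have : B v x + B v x = 0 := by
      have : ∀ α : ZMod 2, α + α = 0 := by decide
      exact this _
    rw [this, zero_smul, add_zero]
  refine ⟨LinearEquiv.ofInvolutive L hinv, fun x => rfl, fun x => rfl, ?_⟩
  intro x y
  show B (x + B v x • v) (y + B v y • v) = B x y
  rw [hB.1, hB.2.1, hB.2.1, Bsmul_right hB, Bsmul_right hB, Bsmul_left hB,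
    Bsmul_left hB]
  rw [Bsymm hB x v]
  have : ∀ α β γ : ZMod 2, γ + β * α + (α * β + β * (α • B v v)) = γ := by
    intro α β γ
    rw [hB.2.2.1]
    revert α β γ; decide
  exact this (B v x) (B v y) (B x y)

lemma cons_one_indep {x : J} (hx : x ≠ 0) :
    LinearIndependent (ZMod 2) (Fin.cons x (Fin.elim0) : Fin 1 → J) := by
  rw [linearIndependent_fin_cons]
  refine ⟨linearIndependent_empty_type, ?_⟩
  simp [Set.range_eq_empty, hx]

lemma notin_span_singleton {x y : J} (hy0 : y ≠ 0) (hyx : y ≠ x) :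
    y ∉ Submodule.span (ZMod 2) {x} := by
  intro h
  rw [Submodule.mem_span_singleton] at h
  obtain ⟨c, hc⟩ := h
  rcases zmod2_cases c with rfl | rfl
  · rw [zero_smul] at hc; exact hy0 hc.symm
  · rw [one_smul] at hc; exact hyx hc.symm

lemma notin_span_pair {x y z : J} (hz0 : z ≠ 0) (hzx : z ≠ x) (hzy : z ≠ y)
    (hsum : x + y + z ≠ 0) : z ∉ Submodule.span (ZMod 2) {x, y} := by
  intro h
  rw [Submodule.mem_span_pair] at h
  obtain ⟨α, β, hc⟩ := h
  rcases zmod2_cases α with rfl | rfl <;> rcases zmod2_cases β with rfl | rfl <;>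
    simp only [zero_smul, one_smul, add_zero, zero_add] at hc
  · exact hz0 hc.symm
  · exact hzy hc.symm
  · exact hzx hc.symm
  · apply hsum
    rw [← hc]
    exact add_self_zero _

lemma pair_indep {x y : J} (hx : x ≠ 0) (hy : y ≠ 0) (hxy : x ≠ y) :
    LinearIndependent (ZMod 2) (Fin.cons x (Fin.cons y Fin.elim0) : Fin 2 → J) := by
  rw [linearIndependent_fin_cons]
  refine ⟨cons_one_indep hy, ?_⟩
  have : Set.range (Fin.cons y Fin.elim0 : Fin 1 → J) = {y} := by
    rw [Fin.range_cons]
    simp [Set.range_eq_empty]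
  rw [this]
  exact notin_span_singleton hx hxy

lemma triple_dep {x y z : J} (hx : x ≠ 0) (hy : y ≠ 0) (hz : z ≠ 0)
    (hxy : x ≠ y) (hxz : x ≠ z) (hyz : y ≠ z)
    (h : ¬ LinearIndependent (ZMod 2) ![x, y, z]) : x + y + z = 0 := by
  rw [Fintype.not_linearIndependent_iff] at h
  obtain ⟨g, hsum, i, hi⟩ := h
  rw [Fin.sum_univ_three] at hsum
  simp only [Matrix.cons_val_zero, Matrix.cons_val_one, Matrix.head_cons,
    Matrix.cons_val_two, Matrix.tail_cons] at hsum
  rcases zmod2_cases (g 0) with h0 | h0 <;> rcases zmod2_cases (g 1) with h1 | h1 <;>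
    rcases zmod2_cases (g 2) with h2 | h2 <;>
    rw [h0, h1, h2] at hsum <;>
    simp only [zero_smul, one_smul, add_zero, zero_add] at hsum
  · exfalso; fin_cases i <;> simp_all
  · exact absurd hsum hz
  · exact absurd hsum hy
  · exact absurd (eq_of_add_eq_zero hsum) hyz
  · exact absurd hsum hx
  · exact absurd (eq_of_add_eq_zero hsum) hxz
  · exact absurd (eq_of_add_eq_zero hsum) hxy
  · exact hsum


lemma add_add_self (α : ZMod 2) : α + α = 0 := by revert α; decide

/-- Move `u` to `w` by a symplectic map fixing the vectors `p i`. -/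
lemma move (hB : IsSymplectic B) [FiniteDimensional (ZMod 2) J] {k : ℕ}
    (p : Fin k → J) (u w : J) (hpair : ∀ i, B (p i) u = B (p i) w)
    (hu : LinearIndependent (ZMod 2) (Fin.cons u p))
    (hw : LinearIndependent (ZMod 2) (Fin.cons w p)) :
    ∃ g : J ≃ₗ[ZMod 2] J, (∀ x y, B (g x) (g y) = B x y) ∧
      (∀ i, g (p i) = p i) ∧ g u = w := by
  by_cases huw : u = w
  · exact ⟨LinearEquiv.refl _ _, fun x y => rfl, fun i => rfl, huw⟩
  rcases zmod2_cases (B u w) with hBuw | hBuw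
  · -- B u w = 0 : need auxiliary v with B u v = 1, B w v = 1, B (p i) v = B (p i) u
    have hexv : ∃ v, B u v = 1 ∧ B w v = 1 ∧ ∀ i, B (p i) v = B (p i) u := by
      by_cases hws : w ∈ Submodule.span (ZMod 2) (Set.range (Fin.cons u p))
      · -- w = u + z with z ∈ span p
        rw [Fin.range_cons, Submodule.mem_span_insert] at hws
        obtain ⟨acoef, z, hz, hwz⟩ := hws
        have hwp : w ∉ Submodule.span (ZMod 2) (Set.range p) :=
          (linearIndependent_fin_cons.mp hw).2
        have ha1 : acoef = 1 := by
          rcases zmod2_cases acoef with rfl | rfl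
          · rw [zero_smul, zero_add] at hwz
            exact absurd (hwz ▸ hz) hwp
          · rfl
        subst ha1
        rw [one_smul] at hwz
        obtain ⟨v, hv⟩ := exists_dual hB hu (Fin.cons 1 (fun i => B (p i) u))
        have hvu : B u v = 1 := by simpa using hv 0
        have hvp : ∀ i, B (p i) v = B (p i) u := by
          intro i
          simpa using hv i.succ
        refine ⟨v, hvu, ?_, hvp⟩
        -- B w v = B u v + B z v, and B z v = B z u since z ∈ span p
        have hzv : B z v = B z u := by
          have hker : ∀ s ∈ Submodule.span (ZMod 2) (Set.range p),
              B s v = B s u := by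
            intro s hs
            induction hs using Submodule.span_induction with
            | mem s hs => obtain ⟨i, rfl⟩ := hs; exact hvp i
            | zero => rw [Bzero_left hB, Bzero_left hB]
            | add s t _ _ h1 h2 => rw [hB.1, hB.1, h1, h2]
            | smul c s _ h1 => rw [Bsmul_left hB, Bsmul_left hB, h1]
          exact hker z hz
        rw [hwz, hB.1, hvu, hzv]
        have hzu : B z u = 0 := by
          have : z = u + w := by
            rw [hwz, ← add_assoc, add_self_zero, zero_add]
          rw [this, hB.1, hB.2.2.1, Bsymm hB w u, hBuw, add_zero]
        rw [hzu, add_zero]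
      · -- quadruple independent
        have hind2 : LinearIndependent (ZMod 2) (Fin.cons w (Fin.cons u p)) :=
          linearIndependent_fin_cons.mpr ⟨hu, hws⟩
        obtain ⟨v, hv⟩ := exists_dual hB hind2
          (Fin.cons 1 (Fin.cons 1 (fun i => B (p i) u)))
        refine ⟨v, ?_, ?_, fun i => ?_⟩
        · simpa using hv (0 : Fin (k + 1)).succ
        · simpa using hv 0
        · simpa using hv i.succ.succ
    obtain ⟨v, hvu, hvw, hvp⟩ := hexv
    obtain ⟨T1, hT1, _, hT1s⟩ := transvection hB (u + v)
    obtain ⟨T2, hT2, _, hT2s⟩ := transvection hB (v + w)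
    refine ⟨T1.trans T2, ?_, ?_, ?_⟩
    · intro x y
      show B (T2 (T1 x)) (T2 (T1 y)) = B x y
      rw [hT2s, hT1s]
    · intro i
      have h1 : T1 (p i) = p i := by
        rw [hT1, hB.1, Bsymm hB u, Bsymm hB v, hvp i, add_add_self, zero_smul,
          add_zero]
      show T2 (T1 (p i)) = p i
      rw [h1, hT2, hB.1, Bsymm hB v, Bsymm hB w, hvp i, ← hpair i,
        Bsymm hB (p i) u, add_add_self, zero_smul, add_zero]
    · have h1 : T1 u = v := by
        rw [hT1, hB.1, hB.2.2.1, Bsymm hB v u, hvu, zero_add, one_smul,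
          ← add_assoc, add_self_zero, zero_add]
      show T2 (T1 u) = w
      rw [h1, hT2, hB.1, hB.2.2.1, hvw, zero_add, one_smul,
        ← add_assoc, add_self_zero, zero_add]
  · -- B u w = 1 : single transvection along u + w
    obtain ⟨T, hT, _, hTs⟩ := transvection hB (u + w)
    refine ⟨T, hTs, ?_, ?_⟩
    · intro i
      rw [hT, hB.1, Bsymm hB u, Bsymm hB w, hpair i, add_add_self, zero_smul,
        add_zero]
    · rw [hT, hB.1, hB.2.2.1, Bsymm hB w u, hBuw, zero_add,
        one_smul, ← add_assoc, add_self_zero, zero_add]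


noncomputable def ArfInv' {J : Type*} [Finite J] (q : J → ZMod 2) : ZMod 2 :=
  if Nat.card J < 2 * Nat.card {x : J // q x = 0} then 0 else 1

section Arf
variable [Finite J]

lemma arf_eq_zero_iff' (q : J → ZMod 2)
    (h : (if Nat.card J < 2 * Nat.card {x : J // q x = 0} then (0 : ZMod 2) else 1) = 0) :
    Nat.card J < 2 * Nat.card {x : J // q x = 0} := by
  by_contra hc
  rw [if_neg hc] at h
  exact one_ne_zero h

lemma card_split (q : J → ZMod 2) :
    Nat.card {x : J // q x = 0} + Nat.card {x : J // q x = 1} = Nat.card J := by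
  classical
  have e : {x : J // q x = 0} ⊕ {x : J // ¬ q x = 0} ≃ J := Equiv.sumCompl _
  have e2 : {x : J // ¬ q x = 0} ≃ {x : J // q x = 1} := by
    apply Equiv.subtypeEquivRight
    intro x
    have : ∀ α : ZMod 2, ¬ α = 0 ↔ α = 1 := by decide
    exact this _
  rw [← Nat.card_congr e, Nat.card_sum, Nat.card_congr e2]

/-- If `q` and `q + B c ·` both have Arf invariant `0`, then `q c = 0`. -/
lemma q_val_zero (hB : IsSymplectic B) {q : J → ZMod 2} (hq : q ∈ QuadSet B) (c : J)
    (h1 : (if Nat.card J < 2 * Nat.card {x : J // q x = 0} then (0 : ZMod 2) else 1) = 0)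
    (h2 : (if Nat.card J < 2 * Nat.card {x : J // q x + B c x = 0} then (0 : ZMod 2) else 1) = 0) :
    q c = 0 := by
  rcases zmod2_cases (q c) with h | hc1
  · exact h
  exfalso
  have key : ∀ x, q (x + c) + B c (x + c) = q x + 1 := by
    intro x
    have hqx : q x + q c + q (x + c) = B x c := hq x c
    have hBc : B c (x + c) = B c x + B c c := hB.2.1 c x c
    rw [hBc, hB.2.2.1, add_zero, Bsymm hB c x]
    have harith : ∀ α β γ : ZMod 2, α + 1 + β = γ → β + γ = α + 1 := by decide
    exact harith (q x) (q (x + c)) (B x c) (by rw [← hc1]; exact hqx)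
  have hcard : Nat.card {x : J // q x + B c x = 0} = Nat.card {x : J // q x = 1} := by
    apply Nat.card_congr
    apply Equiv.symm
    refine (Equiv.addRight c).subtypeEquiv fun x => ?_
    show q x = 1 ↔ q (x + c) + B c (x + c) = 0
    rw [key x]
    have : ∀ α : ZMod 2, α = 1 ↔ α + 1 = 0 := by decide
    exact this _
  have c1 := arf_eq_zero_iff' q h1
  have c2 := arf_eq_zero_iff' _ h2
  rw [hcard] at c2
  have c3 := card_split q
  omega

end Arf

/-- Dichotomy: three distinct nonzero vectors are either independent or sum to zero;
translated to finrank of their span. -/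
lemma finrank_span_triple {a : Fin 3 → J} (ha0 : ∀ i, a i ≠ 0)
    (hainj : Function.Injective a) :
    (a 0 + a 1 + a 2 = 0 ∧
      Module.finrank (ZMod 2) (Submodule.span (ZMod 2) (Set.range a)) = 2) ∨
    (LinearIndependent (ZMod 2) a ∧
      Module.finrank (ZMod 2) (Submodule.span (ZMod 2) (Set.range a)) = 3) := by
  have hne01 : a 0 ≠ a 1 := fun h => absurd (hainj h) (by decide)
  have hne02 : a 0 ≠ a 2 := fun h => absurd (hainj h) (by decide)
  have hne12 : a 1 ≠ a 2 := fun h => absurd (hainj h) (by decide)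
  by_cases hdep : LinearIndependent (ZMod 2) a
  · right
    refine ⟨hdep, ?_⟩
    rw [finrank_span_eq_card hdep]
    simp
  · left
    have hsum : a 0 + a 1 + a 2 = 0 := by
      apply triple_dep (ha0 0) (ha0 1) (ha0 2) hne01 hne02 hne12
      intro h
      apply hdep
      have : ![a 0, a 1, a 2] = a := by
        funext i
        fin_cases i <;> rfl
      rwa [this] at h
    refine ⟨hsum, ?_⟩
    have ha2 : a 2 = a 0 + a 1 := (eq_of_add_eq_zero hsum).symm
    have hspan : Submodule.span (ZMod 2) (Set.range a) =
        Submodule.span (ZMod 2) {a 0, a 1} := by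
      apply le_antisymm
      · rw [Submodule.span_le]
        rintro x ⟨i, rfl⟩
        fin_cases i
        · exact Submodule.subset_span (Set.mem_insert _ _)
        · exact Submodule.subset_span (Set.mem_insert_of_mem _ rfl)
        · show a 2 ∈ _
          rw [ha2]
          exact Submodule.add_mem _
            (Submodule.subset_span (Set.mem_insert _ _))
            (Submodule.subset_span (Set.mem_insert_of_mem _ rfl))
      · rw [Submodule.span_le]
        rintro x (rfl | rfl)
        · exact Submodule.subset_span ⟨0, rfl⟩
        · exact Submodule.subset_span ⟨1, rfl⟩
    rw [hspan]
    have hpi := pair_indep (ha0 0) (ha0 1) hne01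
    have hr : Set.range (Fin.cons (a 0) (Fin.cons (a 1) Fin.elim0) : Fin 2 → J)
        = {a 0, a 1} := by
      rw [Fin.range_cons, Fin.range_cons]
      simp [Set.range_eq_empty]
    rw [← hr, finrank_span_eq_card hpi]
    simp


lemma fin3_cases (j : Fin 3) : j = 0 ∨ j = 1 ∨ j = 2 := by revert j; decide

end Stmt11Aux

open Stmt11Aux

/-- In a 12-dimensional symplectic `𝔽₂`-space, two sets
`{q, q+a₁, q+a₂, q+a₃}` and `{q', q'+a₁', q'+a₂', q'+a₃'}` of four distinct even quadratic
refinements with equal span dimensions and, after a permutation, equal pairings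
`aₖ·aₗ = a'_{σk}·a'_{σl}`, lie in the same orbit of the symplectic group acting on
quadratic forms by `q ↦ q ∘ M⁻¹`. -/
theorem stmt_11 {J : Type*} [AddCommGroup J] [Module (ZMod 2) J] [Finite J]
    (B : J → J → ZMod 2) (hB : IsSymplectic B)
    (hdim : Module.finrank (ZMod 2) J = 12)
    (q q' : J → ZMod 2) (hq : q ∈ QuadSet B) (hq' : q' ∈ QuadSet B)
    (a a' : Fin 3 → J)
    (ha0 : ∀ i, a i ≠ 0) (ha0' : ∀ i, a' i ≠ 0)
    (hainj : Function.Injective a) (hainj' : Function.Injective a')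
    (hArf : ArfInv q = 0) (hArf' : ArfInv q' = 0)
    (hArfa : ∀ i, ArfInv (fun x => q x + B (a i) x) = 0)
    (hArfa' : ∀ i, ArfInv (fun x => q' x + B (a' i) x) = 0)
    (hdimspan : Module.finrank (ZMod 2) (Submodule.span (ZMod 2) (Set.range a)) =
      Module.finrank (ZMod 2) (Submodule.span (ZMod 2) (Set.range a')))
    (σ : Equiv.Perm (Fin 3))
    (hσ : ∀ k l, B (a k) (a l) = B (a' (σ k)) (a' (σ l))) :
    ∃ M : J ≃ₗ[ZMod 2] J, (∀ x y, B (M x) (M y) = B x y) ∧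
      ({fun x => q (M.symm x), fun x => q (M.symm x) + B (a 0) (M.symm x),
        fun x => q (M.symm x) + B (a 1) (M.symm x),
        fun x => q (M.symm x) + B (a 2) (M.symm x)} : Set (J → ZMod 2)) =
      ({q', fun x => q' x + B (a' 0) x, fun x => q' x + B (a' 1) x,
        fun x => q' x + B (a' 2) x} : Set (J → ZMod 2)) := by
  classical
  have hqQ : ∀ x y, q x + q y + q (x + y) = B x y := hq
  have hq'Q : ∀ x y, q' x + q' y + q' (x + y) = B x y := hq'
  -- values of q on the aᵢ vanish
  have hqa : ∀ i, q (a i) = 0 := fun i => q_val_zero hB hq (a i) hArf (hArfa i)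
  have hq'a : ∀ i, q' (a' i) = 0 := fun i => q_val_zero hB hq' (a' i) hArf' (hArfa' i)
  -- distinctness
  have hane : ∀ i j : Fin 3, i ≠ j → a i ≠ a j := fun i j hij h => hij (hainj h)
  have ha'ne : ∀ i j : Fin 3, i ≠ j → a' i ≠ a' j := fun i j hij h => hij (hainj' h)
  have hbne : ∀ i j : Fin 3, i ≠ j → a' (σ i) ≠ a' (σ j) :=
    fun i j hij h => hij (σ.injective (hainj' h))
  have hb0 : ∀ i, a' (σ i) ≠ 0 := fun i => ha0' _
  -- dependency dichotomy
  have hsum_b : a' (σ 0) + a' (σ 1) + a' (σ 2) = a' 0 + a' 1 + a' 2 := by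
    have h := Equiv.sum_comp σ a'
    rw [Fin.sum_univ_three, Fin.sum_univ_three] at h
    exact h
  have hdicho : (a 0 + a 1 + a 2 = 0 ∧ a' (σ 0) + a' (σ 1) + a' (σ 2) = 0) ∨
      (LinearIndependent (ZMod 2) a ∧ LinearIndependent (ZMod 2) a') := by
    rcases finrank_span_triple ha0 hainj with ⟨hs, hr⟩ | ⟨hi, hr⟩ <;>
      rcases finrank_span_triple ha0' hainj' with ⟨hs', hr'⟩ | ⟨hi', hr'⟩
    · left; exact ⟨hs, by rw [hsum_b]; exact hs'⟩
    · exfalso; rw [hr, hr'] at hdimspan; omega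
    · exfalso; rw [hr, hr'] at hdimspan; omega
    · right; exact ⟨hi, hi'⟩
  -- Stage construction: a symplectic g with g (a k) = a' (σ k)
  obtain ⟨g, hgs, hga⟩ : ∃ g : J ≃ₗ[ZMod 2] J,
      (∀ x y, B (g x) (g y) = B x y) ∧ ∀ k, g (a k) = a' (σ k) := by
    -- Stage 1
    obtain ⟨g₁, hg₁s, -, hg₁u⟩ := move hB (Fin.elim0 : Fin 0 → J) (a 0) (a' (σ 0))
      (fun i => i.elim0) (cons_one_indep (ha0 0)) (cons_one_indep (hb0 0))
    have hg₁inj : Function.Injective g₁ := g₁.injective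
    -- Stage 2
    have hrange1 : Set.range (Fin.cons (a' (σ 0)) (Fin.elim0 : Fin 0 → J)) =
        {a' (σ 0)} := by
      rw [Fin.range_cons]
      simp [Set.range_eq_empty]
    have mkcons : ∀ u : J, u ≠ 0 → u ≠ a' (σ 0) →
        LinearIndependent (ZMod 2) (Fin.cons u (Fin.cons (a' (σ 0)) Fin.elim0)) := by
      intro u hu0 hub
      rw [linearIndependent_fin_cons]
      refine ⟨cons_one_indep (hb0 0), ?_⟩
      rw [hrange1]
      exact notin_span_singleton hu0 hub
    have hu₁0 : g₁ (a 1) ≠ 0 := by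
      intro h
      exact ha0 1 (hg₁inj (by rw [h, map_zero]))
    have hu₁b : g₁ (a 1) ≠ a' (σ 0) := by
      intro h
      rw [← hg₁u] at h
      exact hane 1 0 (by decide) (hg₁inj h)
    have hpair2 : ∀ i : Fin 1,
        B ((Fin.cons (a' (σ 0)) Fin.elim0 : Fin 1 → J) i) (g₁ (a 1)) =
        B ((Fin.cons (a' (σ 0)) Fin.elim0 : Fin 1 → J) i) (a' (σ 1)) := by
      intro i
      have hi : i = 0 := Subsingleton.elim i 0
      subst hi
      simp only [Fin.cons_zero]
      have h1 : B (a' (σ 0)) (g₁ (a 1)) = B (a 0) (a 1) := by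
        rw [← hg₁u, hg₁s]
      rw [h1, hσ 0 1]
    obtain ⟨g₂, hg₂s, hg₂p, hg₂u⟩ := move hB (Fin.cons (a' (σ 0)) Fin.elim0)
      (g₁ (a 1)) (a' (σ 1)) hpair2 (mkcons _ hu₁0 hu₁b)
      (mkcons _ (hb0 1) (hbne 1 0 (by decide)))
    have hg₂b0 : g₂ (a' (σ 0)) = a' (σ 0) := by
      have := hg₂p 0
      simpa using this
    -- composite of first two stages
    have hg12a0 : g₂ (g₁ (a 0)) = a' (σ 0) := by rw [hg₁u, hg₂b0]
    have hg12a1 : g₂ (g₁ (a 1)) = a' (σ 1) := hg₂u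
    have hg12inj : Function.Injective fun x => g₂ (g₁ x) :=
      g₂.injective.comp g₁.injective
    have hg12s : ∀ x y, B (g₂ (g₁ x)) (g₂ (g₁ y)) = B x y := by
      intro x y
      rw [hg₂s, hg₁s]
    rcases hdicho with ⟨hsa, hsb⟩ | ⟨hia, hia'⟩
    · -- dependent case: a 2 = a 0 + a 1
      refine ⟨g₁.trans g₂, hg12s, fun k => ?_⟩
      have ha2 : a 2 = a 0 + a 1 := (eq_of_add_eq_zero hsa).symm
      have hb2 : a' (σ 2) = a' (σ 0) + a' (σ 1) := (eq_of_add_eq_zero hsb).symm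
      rcases fin3_cases k with rfl | rfl | rfl
      · exact hg12a0
      · exact hg12a1
      · show g₂ (g₁ (a 2)) = a' (σ 2)
        rw [ha2, map_add, map_add, hg12a0, hg12a1, hb2]
    · -- independent case: third stage
      have hsa : a 0 + a 1 + a 2 ≠ 0 := by
        intro h
        apply Fintype.not_linearIndependent_iff.mpr ?_ hia
        refine ⟨fun _ => 1, ?_, 0, one_ne_zero⟩
        rw [Fin.sum_univ_three]
        simpa using h
      have hsb : a' (σ 0) + a' (σ 1) + a' (σ 2) ≠ 0 := by
        rw [hsum_b]
        intro h
        apply Fintype.not_linearIndependent_iff.mpr ?_ hia'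
        refine ⟨fun _ => 1, ?_, 0, one_ne_zero⟩
        rw [Fin.sum_univ_three]
        simpa using h
      set u₂ := g₂ (g₁ (a 2)) with hu₂def
      have hu₂0 : u₂ ≠ 0 := by
        intro h
        exact ha0 2 (hg12inj (by rw [hu₂def] at h; simpa using h))
      have hu₂b0 : u₂ ≠ a' (σ 0) := by
        intro h
        rw [← hg12a0] at h
        exact hane 2 0 (by decide) (hg12inj h)
      have hu₂b1 : u₂ ≠ a' (σ 1) := by
        intro h
        rw [← hg12a1] at h
        exact hane 2 1 (by decide) (hg12inj h)
      have hu₂sum : a' (σ 0) + a' (σ 1) + u₂ ≠ 0 := by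
        intro h
        have : u₂ = a' (σ 0) + a' (σ 1) := (eq_of_add_eq_zero h).symm
        rw [← hg12a0, ← hg12a1, ← map_add, ← map_add] at this
        have h2 : a 2 = a 0 + a 1 := hg12inj this
        apply hsa
        rw [h2]
        exact add_self_zero _
      have hrange2 : Set.range (Fin.cons (a' (σ 0))
          (Fin.cons (a' (σ 1)) (Fin.elim0 : Fin 0 → J))) = {a' (σ 0), a' (σ 1)} := by
        rw [Fin.range_cons, Fin.range_cons]
        simp [Set.range_eq_empty]
      have mkcons3 : ∀ u : J, u ≠ 0 → u ≠ a' (σ 0) → u ≠ a' (σ 1) →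
          (a' (σ 0) + a' (σ 1) + u ≠ 0) →
          LinearIndependent (ZMod 2)
            (Fin.cons u (Fin.cons (a' (σ 0)) (Fin.cons (a' (σ 1)) Fin.elim0))) := by
        intro u h0 hb0' hb1' hsum'
        rw [linearIndependent_fin_cons]
        refine ⟨pair_indep (hb0 0) (hb0 1) (hbne 0 1 (by decide)), ?_⟩
        rw [hrange2]
        exact notin_span_pair h0 hb0' hb1' hsum'
      have hb2sum : a' (σ 0) + a' (σ 1) + a' (σ 2) ≠ 0 := hsb
      have hpair3 : ∀ i : Fin 2,
          B ((Fin.cons (a' (σ 0)) (Fin.cons (a' (σ 1)) Fin.elim0) : Fin 2 → J) i) u₂ =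
          B ((Fin.cons (a' (σ 0)) (Fin.cons (a' (σ 1)) Fin.elim0) : Fin 2 → J) i)
            (a' (σ 2)) := by
        intro i
        have hi : i = 0 ∨ i = 1 := by revert i; decide
        rcases hi with rfl | rfl
        · simp only [Fin.cons_zero]
          have h1 : B (a' (σ 0)) u₂ = B (a 0) (a 2) := by
            rw [hu₂def, ← hg12a0, hg12s]
          rw [h1, hσ 0 2]
        · simp only [show (1 : Fin 2) = Fin.succ 0 from rfl, Fin.cons_succ,
            Fin.cons_zero]
          have h1 : B (a' (σ 1)) u₂ = B (a 1) (a 2) := by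
            rw [hu₂def, ← hg12a1, hg12s]
          rw [h1, hσ 1 2]
      obtain ⟨g₃, hg₃s, hg₃p, hg₃u⟩ := move hB
        (Fin.cons (a' (σ 0)) (Fin.cons (a' (σ 1)) Fin.elim0)) u₂ (a' (σ 2)) hpair3
        (mkcons3 _ hu₂0 hu₂b0 hu₂b1 hu₂sum)
        (mkcons3 _ (hb0 2) (hbne 2 0 (by decide)) (hbne 2 1 (by decide)) hb2sum)
      have hg₃b0 : g₃ (a' (σ 0)) = a' (σ 0) := by simpa using hg₃p 0
      have hg₃b1 : g₃ (a' (σ 1)) = a' (σ 1) := by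
        have := hg₃p 1
        simpa using this
      refine ⟨(g₁.trans g₂).trans g₃, ?_, ?_⟩
      · intro x y
        show B (g₃ (g₂ (g₁ x))) (g₃ (g₂ (g₁ y))) = B x y
        rw [hg₃s, hg12s]
      · intro k
        rcases fin3_cases k with rfl | rfl | rfl
        · show g₃ (g₂ (g₁ (a 0))) = _
          rw [hg12a0, hg₃b0]
        · show g₃ (g₂ (g₁ (a 1))) = _
          rw [hg12a1, hg₃b1]
        · exact hg₃u
  -- residual translation
  have hr : ∀ x y, q (g.symm x) + q (g.symm y) + q (g.symm (x + y)) = B x y := by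
    intro x y
    rw [map_add]
    rw [hqQ (g.symm x) (g.symm y)]
    rw [← hgs (g.symm x) (g.symm y), g.apply_symm_apply, g.apply_symm_apply]
  have hadd : ∀ x y, (q (g.symm (x + y)) + q' (x + y)) =
      (q (g.symm x) + q' x) + (q (g.symm y) + q' y) := by
    intro x y
    have h1 := hr x y
    have h2 := hq'Q x y
    have harith : ∀ α β γ α' β' γ' δ : ZMod 2,
        α + β + γ = δ → α' + β' + γ' = δ → γ + γ' = (α + α') + (β + β') := by decide
    exact harith _ _ _ _ _ _ _ h1 h2
  have hzero : q (g.symm 0) + q' 0 = 0 := by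
    have h := hadd 0 0
    rw [add_zero] at h
    have : ∀ α : ZMod 2, α = α + α → α = 0 := by decide
    exact this _ h
  let L : J →ₗ[ZMod 2] ZMod 2 :=
    { toFun := fun x => q (g.symm x) + q' x
      map_add' := hadd
      map_smul' := by
        intro c x
        simp only [RingHom.id_apply]
        rcases zmod2_cases c with rfl | rfl
        · rw [zero_smul, zero_smul]
          exact hzero
        · rw [one_smul, one_smul] }
  obtain ⟨c, hc⟩ := exists_rep hB L
  have hcval : ∀ y, B c y = q (g.symm y) + q' y := hc
  have hBcb : ∀ k, B c (a' (σ k)) = 0 := by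
    intro k
    rw [hcval]
    have hsymm : g.symm (a' (σ k)) = a k := by
      rw [LinearEquiv.symm_apply_eq, hga k]
    rw [hsymm, hqa k, hq'a (σ k), add_zero]
  -- q' c = 0
  have hkey : ∀ x, q' x + B c x = q (g.symm x) := by
    intro x
    rw [hcval]
    have : ∀ α β : ZMod 2, α + (β + α) = β := by decide
    exact this _ _
  have hcount : Nat.card {x : J // q' x + B c x = 0} = Nat.card {x : J // q x = 0} := by
    have e1 : {x : J // q' x + B c x = 0} ≃ {x : J // q (g.symm x) = 0} :=
      Equiv.subtypeEquivRight (fun x => by rw [hkey x])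
    have e2 : {x : J // q (g.symm x) = 0} ≃ {x : J // q x = 0} :=
      (g.symm.toEquiv).subtypeEquiv (fun x => Iff.rfl)
    rw [Nat.card_congr (e1.trans e2)]
  have h2' : (if Nat.card J < 2 * Nat.card {x : J // q' x + B c x = 0}
      then (0 : ZMod 2) else 1) = 0 := by
    rw [hcount]
    exact hArf
  have hq'c : q' c = 0 := q_val_zero hB hq' c hArf' h2'
  -- the final symplectic map
  obtain ⟨T, hT, hTsym, hTs⟩ := transvection hB c
  refine ⟨g.trans T, ?_, ?_⟩
  · intro x y
    show B (T (g x)) (T (g y)) = B x y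
    rw [hTs, hgs]
  have hMsymm : ∀ x, (g.trans T).symm x = g.symm (x + B c x • c) := by
    intro x
    show g.symm (T.symm x) = _
    rw [hTsym]
  have hrc : q (g.symm c) = 0 := by
    have h := hcval c
    rw [hB.2.2.1, hq'c, add_zero] at h
    exact h.symm
  have key1 : ∀ x, q ((g.trans T).symm x) = q' x := by
    intro x
    rw [hMsymm]
    rcases zmod2_cases (B c x) with h | h
    · rw [h, zero_smul, add_zero]
      have h2 := hcval x
      rw [h] at h2
      have : ∀ α β : ZMod 2, 0 = α + β → α = β := by decide
      exact this _ _ h2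
    · rw [h, one_smul, map_add]
      have hquad := hqQ (g.symm x) (g.symm c)
      have hBsx : B (g.symm x) (g.symm c) = B x c := by
        rw [← hgs (g.symm x) (g.symm c), g.apply_symm_apply, g.apply_symm_apply]
      rw [hBsx, Bsymm hB x c, h] at hquad
      have h2 := hcval x
      rw [h] at h2
      have harith : ∀ α β γ δ : ZMod 2, α + β + γ = 1 → 1 = α + δ → β = 0 → γ = δ := by
        decide
      exact harith (q (g.symm x)) (q (g.symm c)) (q (g.symm x + g.symm c)) (q' x)
        hquad h2 hrc
  have key2 : ∀ (k : Fin 3) x, B (a k) ((g.trans T).symm x) = B (a' (σ k)) x := by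
    intro k x
    rw [← hgs (a k) ((g.trans T).symm x), hga k]
    have : g ((g.trans T).symm x) = x + B c x • c := by
      rw [hMsymm, g.apply_symm_apply]
    rw [this, hB.2.1, Bsmul_right hB, Bsymm hB (a' (σ k)) c, hBcb k, mul_zero,
      add_zero]
  -- rewrite the four functions
  have e0 : (fun x => q ((g.trans T).symm x)) = q' := funext key1
  have ek : ∀ k : Fin 3, (fun x => q ((g.trans T).symm x) +
      B (a k) ((g.trans T).symm x)) = (fun x => q' x + B (a' (σ k)) x) := by
    intro k
    funext x
    rw [key1, key2]
  rw [e0, ek 0, ek 1, ek 2]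
  -- set equality via the permutation σ
  have felem : ∀ j : Fin 3, (fun x => q' x + B (a' j) x) = q' ∨
      (∃ k : Fin 3, (fun x => q' x + B (a' j) x) = fun x => q' x + B (a' (σ k)) x) := by
    intro j
    right
    exact ⟨σ.symm j, by rw [σ.apply_symm_apply]⟩
  apply Set.eq_of_subset_of_subset <;> intro t ht <;>
    simp only [Set.mem_insert_iff, Set.mem_singleton_iff] at ht ⊢
  · rcases ht with rfl | rfl | rfl | rfl
    · exact Or.inl rfl
    · rcases fin3_cases (σ 0) with h | h | h <;> rw [h]
      exacts [Or.inr (Or.inl rfl), Or.inr (Or.inr (Or.inl rfl)),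
        Or.inr (Or.inr (Or.inr rfl))]
    · rcases fin3_cases (σ 1) with h | h | h <;> rw [h]
      exacts [Or.inr (Or.inl rfl), Or.inr (Or.inr (Or.inl rfl)),
        Or.inr (Or.inr (Or.inr rfl))]
    · rcases fin3_cases (σ 2) with h | h | h <;> rw [h]
      exacts [Or.inr (Or.inl rfl), Or.inr (Or.inr (Or.inl rfl)),
        Or.inr (Or.inr (Or.inr rfl))]
  · rcases ht with rfl | rfl | rfl | rfl
    · exact Or.inl rfl
    · rcases felem 0 with h | ⟨k, h⟩
      · rw [h]; exact Or.inl rfl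
      · rw [h]
        rcases fin3_cases k with rfl | rfl | rfl
        exacts [Or.inr (Or.inl rfl), Or.inr (Or.inr (Or.inl rfl)),
          Or.inr (Or.inr (Or.inr rfl))]
    · rcases felem 1 with h | ⟨k, h⟩
      · rw [h]; exact Or.inl rfl
      · rw [h]
        rcases fin3_cases k with rfl | rfl | rfl
        exacts [Or.inr (Or.inl rfl), Or.inr (Or.inr (Or.inl rfl)),
          Or.inr (Or.inr (Or.inr rfl))]
    · rcases felem 2 with h | ⟨k, h⟩
      · rw [h]; exact Or.inl rfl
      · rw [h]
        rcases fin3_cases k with rfl | rfl | rfl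
        exacts [Or.inr (Or.inl rfl), Or.inr (Or.inr (Or.inl rfl)),
          Or.inr (Or.inr (Or.inr rfl))]
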